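/- Fix a real q > 1, a natural number r ≥ 1, and natural numbers m, n with n ≥ m + 2r. Let L : ℝ × ℝ^{r+1} → ℝ, written L(t, u_0, …, u_r), be such that for each t the map (u_0, …, u_r) ↦ L(t, u_0, …, u_r) is continuously differentiable. For y : ℕ → ℝ and j ∈ ℕ write y_{(j)} for the shifted function y_{(j)}(k) = y(k − j), and set 𝓛[y] = Σ_{k=m+r}^{n} (q^k − q^{k−1})·L(q^k, (D^0 y_{(r)})(k), (D^1 y_{(r−1)})(k), …, (D^{r−1} y_{(1)})(k), (D^r y_{(0)})(k)). Suppose y* : ℕ → ℝ satisfies the boundary conditions (D^i y*)(m + r − 1) = α_i and (D^i y*)(n) = β_i for i = 0, …, r − 1, and is a weak local extremum: there exists δ > 0 such that 𝓛[y*] ≤ 𝓛[y] (or 𝓛[y*] ≥ 𝓛[y]) for every y satisfying the same boundary conditions with max_{m ≤ k ≤ n} |y(k) − y*(k)| < δ. Then, setting g_i(k) = ∂L/∂u_i(q^k, (D^0 y*_{(r)})(k), …, (D^r y*_{(0)})(k)), one has Σ_{i=0}^{r} (−1)^i · q^{i(i−1)/2} · (D^i g_i)(k) = 0 for all k with m +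 2r ≤ k ≤ n. -/

import Mathlib

/-- The nabla derivative on the time scale `q^ℕ₀` (encoded by indices `k ∈ ℕ`):
`(Df)(k) = (f(k) − f(k−1)) / (q^k − q^{k−1})`. -/
noncomputable def qNabla (q : ℝ) (f : ℕ → ℝ) : ℕ → ℝ :=
  fun k => (f k - f (k - 1)) / (q ^ k - q ^ (k - 1))

section helpers
variable {q : ℝ}

lemma qh_pos (hq : 1 < q) {p : ℕ} (hp : 1 ≤ p) : 0 < q ^ p - q ^ (p - 1) := by
  have h0 : (0:ℝ) < q := lt_trans one_pos hq
  have : q ^ (p - 1) < q ^ p := pow_lt_pow_right₀ hq (by omega)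
  linarith

lemma qh_step (hq : 1 < q) {p : ℕ} (hp : 1 ≤ p) :
    q ^ (p + 1) - q ^ p = q * (q ^ p - q ^ (p - 1)) := by
  obtain ⟨p, rfl⟩ : ∃ p', p = p' + 1 := ⟨p - 1, by omega⟩
  simp only [Nat.add_sub_cancel]
  ring

lemma qNabla_iter_comb (i : ℕ) (f g : ℕ → ℝ) (c : ℝ) :
    (qNabla q)^[i] (fun x => f x + c * g x) =
      fun k => (qNabla q)^[i] f k + c * (qNabla q)^[i] g k := by
  induction i generalizing f g with
  | zero => simp
  | succ i ih =>
    rw [Function.iterate_succ_apply, Function.iterate_succ_apply,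
      Function.iterate_succ_apply]
    have : qNabla q (fun x => f x + c * g x) =
        fun x => qNabla q f x + c * qNabla q g x := by
      funext x; simp only [qNabla]; ring
    rw [this, ih]

lemma qNabla_iter_zero (i : ℕ) :
    (qNabla q)^[i] (fun _ => 0) = fun _ => (0:ℝ) := by
  induction i with
  | zero => rfl
  | succ i ih =>
    rw [Function.iterate_succ_apply]
    have : qNabla q (fun _ => 0) = fun _ => (0:ℝ) := by
      funext x; simp [qNabla]
    rw [this, ih]

lemma qNabla_iter_smul (i : ℕ) (g : ℕ → ℝ) (c : ℝ) :
    (qNabla q)^[i] (fun x => c * g x) = fun k => c * (qNabla q)^[i] g k := by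
  have h := qNabla_iter_comb (q := q) i (fun _ => 0) g c
  simp only [zero_add, qNabla_iter_zero] at h
  simpa using h

lemma qNabla_iter_vanish (i : ℕ) (f : ℕ → ℝ) (k : ℕ)
    (hf : ∀ j ≤ i, f (k - j) = 0) : (qNabla q)^[i] f k = 0 := by
  induction i generalizing f with
  | zero => simpa using hf 0 le_rfl
  | succ i ih =>
    rw [Function.iterate_succ_apply]
    refine ih _ fun j hj => ?_
    simp only [qNabla]
    rw [hf j (by omega), Nat.sub_sub, hf (j + 1) (by omega)]
    simp

lemma qNabla_iter_congr (i : ℕ) (f g : ℕ → ℝ) (k : ℕ)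
    (hfg : ∀ j ≤ i, f (k - j) = g (k - j)) :
    (qNabla q)^[i] f k = (qNabla q)^[i] g k := by
  induction i generalizing f g with
  | zero => simpa using hfg 0 le_rfl
  | succ i ih =>
    rw [Function.iterate_succ_apply, Function.iterate_succ_apply]
    refine ih _ _ fun j hj => ?_
    simp only [qNabla]
    rw [hfg j (by omega), Nat.sub_sub, hfg (j + 1) (by omega)]

lemma qNabla_iter_shift (hq : 1 < q) (i : ℕ) (g : ℕ → ℝ) (k : ℕ) (hk : i + 1 ≤ k) :
    (qNabla q)^[i] (fun x => g (x + 1)) k = q ^ i * (qNabla q)^[i] g (k + 1) := by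
  induction i generalizing g k with
  | zero => simp
  | succ i ih =>
    rw [Function.iterate_succ_apply]
    have hcongr : (qNabla q)^[i] (qNabla q fun x => g (x + 1)) k =
        (qNabla q)^[i] (fun p => q * qNabla q g (p + 1)) k := by
      refine qNabla_iter_congr i _ _ k fun j hj => ?_
      have hp1 : 1 ≤ k - j := by omega
      simp only [qNabla]
      have h1 : k - j - 1 + 1 = k - j := by omega
      have h2 : k - j + 1 - 1 = k - j := by omega
      rw [h1, h2, qh_step hq hp1]
      have := (qh_pos hq hp1).ne'
      field_simp
    rw [hcongr, qNabla_iter_smul]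
    beta_reduce
    rw [ih (qNabla q g) k (by omega), Function.iterate_succ_apply]
    ring
end helpers

noncomputable def qInd (s : ℕ) : ℕ → ℝ := fun k => if k = s then 1 else 0

section core
variable {q : ℝ}

lemma qInd_vanish_lt (i s k : ℕ) (hks : k < s) :
    (qNabla q)^[i] (qInd s) k = 0 := by
  refine qNabla_iter_vanish i _ k fun j hj => ?_
  simp only [qInd, if_neg (by omega : ¬ k - j = s)]

lemma qInd_vanish_gt (i s k : ℕ) (hks : s + i < k) :
    (qNabla q)^[i] (qInd s) k = 0 := by
  refine qNabla_iter_vanish i _ k fun j hj => ?_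
  simp only [qInd, if_neg (by omega : ¬ k - j = s)]

lemma tri_succ (i : ℕ) : (i + 1) * i / 2 = i * (i - 1) / 2 + i := by
  rcases i with _ | j
  · simp
  · obtain ⟨c, hc⟩ : Even ((j + 1) * j) := by
      rw [mul_comm]; exact Nat.even_mul_succ_self j
    have h2 : (j + 1 + 1) * (j + 1) = (j + 1) * j + 2 * (j + 1) := by ring
    simp only [Nat.add_sub_cancel]
    omega

lemma qCore (hq : 1 < q) (i : ℕ) : ∀ (s : ℕ), 1 ≤ s → ∀ (φ : ℕ → ℝ),
    ∑ k ∈ Finset.Icc s (s + i), (q ^ k - q ^ (k - 1)) * φ k * (qNabla q)^[i] (qInd s) k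
    = (-1) ^ i * q ^ (i * (i - 1) / 2) * (q ^ (s + i) - q ^ (s + i - 1)) *
        (qNabla q)^[i] φ (s + i) := by
  induction i with
  | zero =>
    intro s hs φ
    simp [qInd]
  | succ i ih =>
    intro s hs φ
    set E : ℕ → ℝ := (qNabla q)^[i] (qInd s) with hE
    have hiter : (qNabla q)^[i + 1] (qInd s) = qNabla q E := Function.iterate_succ_apply' _ _ _
    have step1 : ∑ k ∈ Finset.Icc s (s + (i + 1)),
        (q ^ k - q ^ (k - 1)) * φ k * (qNabla q)^[i + 1] (qInd s) k
        = ∑ k ∈ Finset.Icc s (s + (i + 1)), φ k * (E k - E (k - 1)) := by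
      refine Finset.sum_congr rfl fun k hk => ?_
      rw [Finset.mem_Icc] at hk
      have hne := (qh_pos hq (by omega : 1 ≤ k)).ne'
      rw [hiter]
      simp only [qNabla]
      field_simp
    have hsplit : ∑ k ∈ Finset.Icc s (s + (i + 1)), φ k * (E k - E (k - 1))
        = ∑ k ∈ Finset.Icc s (s + (i + 1)), φ k * E k
          - ∑ k ∈ Finset.Icc s (s + (i + 1)), φ k * E (k - 1) := by
      rw [← Finset.sum_sub_distrib]
      exact Finset.sum_congr rfl fun k _ => by ring
    have hA : ∑ k ∈ Finset.Icc s (s + (i + 1)), φ k * E k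
        = ∑ k ∈ Finset.Icc s (s + i), φ k * E k := by
      have : s + (i + 1) = (s + i) + 1 := by ring
      rw [this, Finset.sum_Icc_succ_top (by omega)]
      rw [hE, qInd_vanish_gt i s (s + i + 1) (by omega)]
      ring
    have hB : ∑ k ∈ Finset.Icc s (s + (i + 1)), φ k * E (k - 1)
        = ∑ k ∈ Finset.Icc s (s + i), φ (k + 1) * E k := by
      have h1 : Finset.Icc s (s + (i + 1)) = insert s (Finset.Icc (s + 1) (s + (i + 1))) := by
        rw [Finset.Icc_add_one_left_eq_Ioc, Finset.Ioc_insert_left (by omega)]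
      rw [h1, Finset.sum_insert (by simp [Finset.mem_Icc])]
      have h2 : Finset.Icc (s + 1) (s + (i + 1))
          = Finset.map (addRightEmbedding 1) (Finset.Icc s (s + i)) := by
        rw [Finset.map_add_right_Icc]
        rfl
      rw [h2, Finset.sum_map]
      rw [hE, qInd_vanish_lt i s (s - 1) (by omega)]
      simp [addRightEmbedding]
    set ψ : ℕ → ℝ := fun k => (φ k - φ (k + 1)) / (q ^ k - q ^ (k - 1)) with hψ
    have step2 : ∑ k ∈ Finset.Icc s (s + i), φ k * E k
          - ∑ k ∈ Finset.Icc s (s + i), φ (k + 1) * E k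
        = ∑ k ∈ Finset.Icc s (s + i), (q ^ k - q ^ (k - 1)) * ψ k * E k := by
      rw [← Finset.sum_sub_distrib]
      refine Finset.sum_congr rfl fun k hk => ?_
      rw [Finset.mem_Icc] at hk
      have hne := (qh_pos hq (by omega : 1 ≤ k)).ne'
      rw [hψ]
      field_simp
    have step3 := ih s hs ψ
    have hψi : (qNabla q)^[i] ψ (s + i) = -q ^ (i + 1) * (qNabla q)^[i + 1] φ (s + i + 1) := by
      have hc : (qNabla q)^[i] ψ (s + i)
          = (qNabla q)^[i] (fun p => (-q) * (qNabla q φ) (p + 1)) (s + i) := by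
        refine qNabla_iter_congr i _ _ (s + i) fun j hj => ?_
        have hp1 : 1 ≤ s + i - j := by omega
        simp only [hψ, qNabla]
        have h2 : s + i - j + 1 - 1 = s + i - j := by omega
        rw [h2, qh_step hq hp1]
        have := (qh_pos hq hp1).ne'
        field_simp
        ring
      rw [hc, qNabla_iter_smul]
      beta_reduce
      rw [qNabla_iter_shift hq i (qNabla q φ) (s + i) (by omega),
        Function.iterate_succ_apply]
      ring
    have hh : q ^ (s + (i + 1)) - q ^ (s + (i + 1) - 1)
        = q * (q ^ (s + i) - q ^ (s + i - 1)) := by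
      have := qh_step hq (by omega : 1 ≤ s + i)
      have he : s + (i + 1) = s + i + 1 := by ring
      rw [he]
      simpa using this
    have he2 : s + (i + 1) = s + i + 1 := by ring
    rw [step1, hsplit, hA, hB, step2, step3, hψi, hh]
    simp only [Nat.add_sub_cancel, he2, tri_succ, pow_succ, pow_add]
    ring
end core

lemma fderiv_apply_pi {N : ℕ} {F : (Fin N → ℝ) → ℝ} (hF : ContDiff ℝ 1 F)
    (u v : Fin N → ℝ) :
    fderiv ℝ F u v
      = ∑ i : Fin N, v i * deriv (fun z => F (Function.update u i z)) (u i) := by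
  have hd : DifferentiableAt ℝ F u := (hF.differentiable one_ne_zero) u
  have hpart : ∀ i : Fin N, deriv (fun z => F (Function.update u i z)) (u i)
      = fderiv ℝ F u ((Pi.single i 1 : Fin N → ℝ)) := by
    intro i
    have hupd : (fun z : ℝ => Function.update u i z)
        = fun z => u + (z - u i) • (Pi.single i 1 : Fin N → ℝ) := by
      funext z j
      by_cases hji : j = i
      · subst hji; simp
      · simp [Function.update_of_ne hji, Pi.single_eq_of_ne hji]
    have hinner : HasDerivAt (fun z : ℝ => u + (z - u i) • (Pi.single i 1 : Fin N → ℝ))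
        ((Pi.single i 1 : Fin N → ℝ)) (u i) := by
      simpa using (((hasDerivAt_id (u i)).sub_const (u i)).smul_const
        ((Pi.single i 1 : Fin N → ℝ))).const_add u
    have hF1 : HasFDerivAt F (fderiv ℝ F u) (u + ((u i : ℝ) - u i) • (Pi.single i 1 : Fin N → ℝ)) := by
      rw [show u + ((u i : ℝ) - u i) • (Pi.single i 1 : Fin N → ℝ) = u by simp]
      exact hd.hasFDerivAt
    have hcomp : HasDerivAt (fun z : ℝ => F (u + (z - u i) • (Pi.single i 1 : Fin N → ℝ)))
        (fderiv ℝ F u ((Pi.single i 1 : Fin N → ℝ))) (u i) := hF1.comp_hasDerivAt _ hinner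
    have h2 : (fun z : ℝ => F (Function.update u i z))
        = fun z => F (u + (z - u i) • (Pi.single i 1 : Fin N → ℝ)) := by
      funext z; rw [congrFun hupd z]
    rw [h2]
    exact hcomp.deriv
  have hv : v = ∑ i : Fin N, v i • (Pi.single i 1 : Fin N → ℝ) := by
    conv_lhs => rw [← Finset.univ_sum_single v]
    refine Finset.sum_congr rfl fun i _ => ?_
    rw [← Pi.single_smul, smul_eq_mul, mul_one]
  calc fderiv ℝ F u v = fderiv ℝ F u (∑ i : Fin N, v i • (Pi.single i 1 : Fin N → ℝ)) := by rw [← hv]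
    _ = ∑ i : Fin N, v i * fderiv ℝ F u ((Pi.single i 1 : Fin N → ℝ)) := by
        rw [map_sum]
        exact Finset.sum_congr rfl fun i _ => by
          rw [(fderiv ℝ F u).map_smul, smul_eq_mul]
    _ = ∑ i : Fin N, v i * deriv (fun z => F (Function.update u i z)) (u i) := by
        exact Finset.sum_congr rfl fun i _ => by rw [hpart i]


/-- The higher-order nabla Lagrangian functional on the q-scale:
`𝓛[y] = Σ_{k=m+r}^{n} (q^k − q^{k−1})·L(q^k, (D⁰y_{(r)})(k), …, (Dʳy_{(0)})(k))`,
where `y_{(j)}(k) = y(k−j)`. -/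
noncomputable def qNablaLagrangianFunctional (q : ℝ) (r m n : ℕ)
    (L : ℝ → (Fin (r + 1) → ℝ) → ℝ) (y : ℕ → ℝ) : ℝ :=
  ∑ k ∈ Finset.Icc (m + r) n, (q ^ k - q ^ (k - 1)) *
    L (q ^ k) (fun i : Fin (r + 1) =>
      (qNabla q)^[(i : ℕ)] (fun k' => y (k' - (r - (i : ℕ)))) k)

/-- The q-calculus Euler-Lagrange equation: if for each `t` the map
`(u₀,…,u_r) ↦ L(t,u₀,…,u_r)` is `C¹` and `y*` is a weak local extremum of `𝓛`
subject to the boundary conditions `(Dⁱy)(m+r−1) = αᵢ`, `(Dⁱy)(n) = βᵢ`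
(`i = 0,…,r−1`), then, with `gᵢ(k) = ∂L/∂uᵢ(q^k, (D⁰y*_{(r)})(k), …, (Dʳy*_{(0)})(k))`,
one has `Σ_{i=0}^{r} (−1)ⁱ q^{i(i−1)/2} (Dⁱgᵢ)(k) = 0` for all `m+2r ≤ k ≤ n`. -/
theorem euler_lagrange_qscale (q : ℝ) (hq : 1 < q) (r : ℕ) (hr : 1 ≤ r)
    (m n : ℕ) (hmn : m + 2 * r ≤ n) (L : ℝ → (Fin (r + 1) → ℝ) → ℝ)
    (hL : ∀ t : ℝ, ContDiff ℝ 1 (L t))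
    (α β : ℕ → ℝ) (ystar : ℕ → ℝ)
    (hbc : ∀ i < r, (qNabla q)^[i] ystar (m + r - 1) = α i ∧
                    (qNabla q)^[i] ystar n = β i)
    (hext : ∃ δ > (0 : ℝ),
      (∀ y : ℕ → ℝ,
        (∀ i < r, (qNabla q)^[i] y (m + r - 1) = α i ∧ (qNabla q)^[i] y n = β i) →
        (∀ k : ℕ, m ≤ k → k ≤ n → |y k - ystar k| < δ) →
        qNablaLagrangianFunctional q r m n L ystar ≤
          qNablaLagrangianFunctional q r m n L y) ∨
      (∀ y : ℕ → ℝ,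
        (∀ i < r, (qNabla q)^[i] y (m + r - 1) = α i ∧ (qNabla q)^[i] y n = β i) →
        (∀ k : ℕ, m ≤ k → k ≤ n → |y k - ystar k| < δ) →
        qNablaLagrangianFunctional q r m n L y ≤
          qNablaLagrangianFunctional q r m n L ystar)) :
    ∀ k : ℕ, m + 2 * r ≤ k → k ≤ n →
      ∑ i : Fin (r + 1), (-1 : ℝ) ^ (i : ℕ) * q ^ ((i : ℕ) * ((i : ℕ) - 1) / 2) *
        (qNabla q)^[(i : ℕ)]
          (fun s => deriv
            (fun z => L (q ^ s) (Function.update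
              (fun j : Fin (r + 1) =>
                (qNabla q)^[(j : ℕ)] (fun k' => ystar (k' - (r - (j : ℕ)))) s) i z))
            ((qNabla q)^[(i : ℕ)] (fun k' => ystar (k' - (r - (i : ℕ)))) s)) k = 0 := by
  obtain ⟨δ, hδ, hcase⟩ := hext
  intro k₀ hk1 hk2
  set s := k₀ - r with hs_def
  have hks : k₀ = s + r := by omega
  have hs1 : 1 ≤ s := by omega
  have hsm : m + r ≤ s := by omega
  have hsn : s + r ≤ n := by omega
  have hgI : ∀ i : ℕ, (fun k' => qInd s (k' - (r - i))) = qInd (s + (r - i)) := by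
    intro i; funext k'; simp only [qInd]
    exact if_congr (by omega) rfl rfl
  set U : ℕ → Fin (r + 1) → ℝ :=
    fun t (j : Fin (r + 1)) =>
      (qNabla q)^[(j : ℕ)] (fun k' => ystar (k' - (r - (j : ℕ)))) t with hU
  set V : Fin (r + 1) → ℕ → ℝ :=
    fun i => (qNabla q)^[(i : ℕ)] (qInd (s + (r - (i : ℕ)))) with hV
  set g : Fin (r + 1) → ℕ → ℝ :=
    fun i t => deriv (fun z => L (q ^ t) (Function.update (U t) i z)) (U t i) with hg
  set G : ℝ → ℝ := fun ε => ∑ k ∈ Finset.Icc (m + r) n,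
    (q ^ k - q ^ (k - 1)) * L (q ^ k) (fun i => U k i + ε * V i k) with hG
  -- Claim 1 : the functional along the perturbation
  have claim1 : ∀ ε : ℝ, qNablaLagrangianFunctional q r m n L
      (fun x => ystar x + ε * qInd s x) = G ε := by
    intro ε
    simp only [qNablaLagrangianFunctional, hG]
    refine Finset.sum_congr rfl fun k hk => ?_
    congr 1
    refine congrArg _ ?_
    funext i
    have e1 : (fun k' => ystar (k' - (r - (i : ℕ))) + ε * qInd s (k' - (r - (i : ℕ))))
        = fun k' => ystar (k' - (r - (i : ℕ))) + ε * qInd (s + (r - (i : ℕ))) k' := by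
      funext k'; rw [congrFun (hgI (i : ℕ)) k']
    rw [e1, qNabla_iter_comb]
  -- Claim 3 : boundary conditions for the perturbed curve
  have claim3 : ∀ ε : ℝ, ∀ i < r,
      (qNabla q)^[i] (fun x => ystar x + ε * qInd s x) (m + r - 1) = α i ∧
      (qNabla q)^[i] (fun x => ystar x + ε * qInd s x) n = β i := by
    intro ε i hi
    have hz1 : (qNabla q)^[i] (qInd s) (m + r - 1) = 0 :=
      qNabla_iter_vanish i _ _ (fun j hj => by
        simp only [qInd]; exact if_neg (by omega))
    have hz2 : (qNabla q)^[i] (qInd s) n = 0 :=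
      qNabla_iter_vanish i _ _ (fun j hj => by
        simp only [qInd]; exact if_neg (by omega))
    rw [qNabla_iter_comb i ystar (qInd s) ε]
    beta_reduce
    rw [hz1, hz2, (hbc i hi).1, (hbc i hi).2]
    constructor <;> ring
  -- Claim 4 : closeness
  have claim4 : ∀ ε : ℝ, |ε| < δ → ∀ x : ℕ, m ≤ x → x ≤ n →
      |(ystar x + ε * qInd s x) - ystar x| < δ := by
    intro ε hε x _ _
    have h1 : |ε * qInd s x| ≤ |ε| := by
      rw [abs_mul]
      by_cases hx : x = s
      · simp [qInd, hx]
      · simp [qInd, hx, abs_nonneg]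
    calc |(ystar x + ε * qInd s x) - ystar x| = |ε * qInd s x| := by
          rw [add_sub_cancel_left]
      _ ≤ |ε| := h1
      _ < δ := hε
  -- derivative of each summand
  have hw : ∀ k : ℕ, HasDerivAt (fun ε : ℝ => L (q ^ k) (fun i => U k i + ε * V i k))
      ((fderiv ℝ (L (q ^ k)) (U k)) (fun i => V i k)) 0 := by
    intro k
    set w : Fin (r + 1) → ℝ := fun i => V i k with hw'
    have h1 : HasDerivAt (fun ε : ℝ => U k + ε • w) w 0 := by
      simpa using ((hasDerivAt_id (0 : ℝ)).smul_const w).const_add (U k)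
    have hdiff : HasFDerivAt (L (q ^ k)) (fderiv ℝ (L (q ^ k)) (U k)) (U k + (0 : ℝ) • w) := by
      rw [show U k + (0 : ℝ) • w = U k by simp]
      exact (((hL (q ^ k)).differentiable one_ne_zero) (U k)).hasFDerivAt
    have h3 := hdiff.comp_hasDerivAt 0 h1
    have h4 : (fun ε : ℝ => L (q ^ k) (U k + ε • w))
        = fun ε => L (q ^ k) (fun i => U k i + ε * V i k) := by
      funext ε; congr 1
    exact h4 ▸ h3
  have hG' : HasDerivAt G (∑ k ∈ Finset.Icc (m + r) n,
      (q ^ k - q ^ (k - 1)) * ((fderiv ℝ (L (q ^ k)) (U k)) (fun i => V i k))) 0 := by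
    simp only [hG]
    exact HasDerivAt.fun_sum fun k _ => (hw k).const_mul (q ^ k - q ^ (k - 1))
  -- extremum gives vanishing derivative
  have hd0 : deriv G 0 = 0 := by
    have h0 : G 0 = qNablaLagrangianFunctional q r m n L ystar := by
      rw [← claim1 0]; congr 1; funext x; simp
    rcases hcase with hmin | hmax
    · have hloc : IsLocalMin G 0 := by
        filter_upwards [Metric.ball_mem_nhds (0 : ℝ) hδ] with ε hε
        rw [h0, ← claim1 ε]
        exact hmin _ (claim3 ε) (claim4 ε (by simpa [Real.dist_eq] using hε))
      exact hloc.deriv_eq_zero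
    · have hloc : IsLocalMax G 0 := by
        filter_upwards [Metric.ball_mem_nhds (0 : ℝ) hδ] with ε hε
        rw [h0, ← claim1 ε]
        exact hmax _ (claim3 ε) (claim4 ε (by simpa [Real.dist_eq] using hε))
      exact hloc.deriv_eq_zero
  have hD0 : ∑ k ∈ Finset.Icc (m + r) n,
      (q ^ k - q ^ (k - 1)) * ((fderiv ℝ (L (q ^ k)) (U k)) (fun i => V i k)) = 0 := by
    rw [← hG'.deriv]; exact hd0
  -- expand the Fréchet derivative into partials
  have hfd : ∀ k : ℕ, (fderiv ℝ (L (q ^ k)) (U k)) (fun i => V i k)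
      = ∑ i : Fin (r + 1), V i k * g i k := by
    intro k
    rw [fderiv_apply_pi (hL (q ^ k)) (U k) (fun i => V i k)]
  have swap : ∑ k ∈ Finset.Icc (m + r) n,
      (q ^ k - q ^ (k - 1)) * ((fderiv ℝ (L (q ^ k)) (U k)) (fun i => V i k))
      = ∑ i : Fin (r + 1), ∑ k ∈ Finset.Icc (m + r) n,
          (q ^ k - q ^ (k - 1)) * g i k * V i k := by
    calc ∑ k ∈ Finset.Icc (m + r) n,
        (q ^ k - q ^ (k - 1)) * ((fderiv ℝ (L (q ^ k)) (U k)) (fun i => V i k))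
        = ∑ k ∈ Finset.Icc (m + r) n, ∑ i : Fin (r + 1),
            (q ^ k - q ^ (k - 1)) * g i k * V i k := by
          refine Finset.sum_congr rfl fun k _ => ?_
          rw [hfd k, Finset.mul_sum]
          exact Finset.sum_congr rfl fun i _ => by ring
      _ = _ := Finset.sum_comm
  have per_i : ∀ i : Fin (r + 1),
      ∑ k ∈ Finset.Icc (m + r) n, (q ^ k - q ^ (k - 1)) * g i k * V i k
      = (-1 : ℝ) ^ (i : ℕ) * q ^ ((i : ℕ) * ((i : ℕ) - 1) / 2) *
          (q ^ k₀ - q ^ (k₀ - 1)) * (qNabla q)^[(i : ℕ)] (g i) k₀ := by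
    intro i
    have hir : (i : ℕ) ≤ r := Nat.lt_succ_iff.mp i.isLt
    have hsub : Finset.Icc (s + (r - (i : ℕ))) (s + (r - (i : ℕ)) + (i : ℕ))
        ⊆ Finset.Icc (m + r) n := by
      intro x hx; rw [Finset.mem_Icc] at hx ⊢; omega
    have hzero : ∀ x ∈ Finset.Icc (m + r) n,
        x ∉ Finset.Icc (s + (r - (i : ℕ))) (s + (r - (i : ℕ)) + (i : ℕ)) →
        (q ^ x - q ^ (x - 1)) * g i x * V i x = 0 := by
      intro x _ hnx
      rw [Finset.mem_Icc] at hnx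
      push_neg at hnx
      have hV0 : V i x = 0 := by
        rcases lt_or_ge x (s + (r - (i : ℕ))) with hlt | hle
        · simp only [hV]
          exact qInd_vanish_lt _ _ _ hlt
        · simp only [hV]
          exact qInd_vanish_gt _ _ _ (by omega)
      rw [hV0, mul_zero]
    rw [← Finset.sum_subset hsub hzero]
    have hcore := qCore hq (i : ℕ) (s + (r - (i : ℕ))) (by omega) (g i)
    simp only [hV]
    rw [hcore]
    have he : s + (r - (i : ℕ)) + (i : ℕ) = k₀ := by omega
    rw [he]
  have final : (q ^ k₀ - q ^ (k₀ - 1)) *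
      ∑ i : Fin (r + 1), (-1 : ℝ) ^ (i : ℕ) * q ^ ((i : ℕ) * ((i : ℕ) - 1) / 2) *
        (qNabla q)^[(i : ℕ)] (g i) k₀ = 0 := by
    rw [Finset.mul_sum, ← hD0, swap]
    refine Finset.sum_congr rfl fun i _ => ?_
    rw [per_i i]
    ring
  have hne := (qh_pos hq (by omega : 1 ≤ k₀)).ne'
  have hsum0 : ∑ i : Fin (r + 1), (-1 : ℝ) ^ (i : ℕ) * q ^ ((i : ℕ) * ((i : ℕ) - 1) / 2) *
      (qNabla q)^[(i : ℕ)] (g i) k₀ = 0 := by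
    rcases mul_eq_zero.mp final with h | h
    · exact absurd h hne
    · exact h
  exact hsum0
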